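/- Over an item alphabet with at least five distinct items a, b, c, d, e, none of the eight containment relations is anti-monotonic on (N, ⊑): there exist NSPs p, p' and a sequence s (namely p = ⟨b ¬c a⟩, p' = ⟨b ¬c d a⟩ with singleton itemsets, and s = ⟨b e d c a⟩ the list of singleton itemsets {b}, {e}, {d}, {c}, {a}) such that p ⊑ p' and, for every choice of occurrence mode (weak or strong), embedding type (soft or strict), and non-inclusion relation (partial or total), p' occurs in s but p does not occur in s. -/

import Mathlib

namespace NSPpaper

/-- A sequence is a finite list of itemsets (finite sets of items). -/
abbrev Seq (ι : Type*) := List (Finset ι)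

/-- `P` is partially non-included in `I`: `P` is empty or some element of `P` is not in `I`. -/
def PartialNonIncl {ι : Type*} (P I : Finset ι) : Prop := P = ∅ ∨ ∃ e ∈ P, e ∉ I

/-- `P` is totally non-included in `I`: no element of `P` is in `I`. -/
def TotalNonIncl {ι : Type*} (P I : Finset ι) : Prop := ∀ e ∈ P, e ∉ I

/-- A negative sequential pattern `⟨p₁ ¬q₁ p₂ ¬q₂ … ¬q_{m-1} p_m⟩`:
nonempty positive itemsets `pos = [p₁, …, p_m]` and negative itemsets
`neg = [q₁, …, q_{m-1}]` (possibly empty itemsets). -/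
structure NSP (ι : Type*) where
  pos : List (Finset ι)
  neg : List (Finset ι)
  pos_ne : pos ≠ []
  pos_nonempty : ∀ P ∈ pos, P.Nonempty
  len : neg.length + 1 = pos.length

variable {ι : Type*}

/-- `e` is an embedding of the positive part `p⁺` of `p` in `s`:
strictly increasing positions with `p_i ⊆ s_{e_i}`. -/
def IsPosEmbedding (p : NSP ι) (s : Seq ι) (e : Fin p.pos.length → Fin s.length) : Prop :=
  StrictMono e ∧ ∀ i, p.pos.get i ⊆ s.get (e i)

/-- Soft embedding w.r.t. the non-inclusion relation `ni`:
an embedding of `p⁺` such that `q_i ⋫ s_j` for every `j` with `e_i < j < e_{i+1}`. -/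
def IsSoftEmbedding (ni : Finset ι → Finset ι → Prop) (p : NSP ι) (s : Seq ι)
    (e : Fin p.pos.length → Fin s.length) : Prop :=
  IsPosEmbedding p s e ∧
  ∀ i : Fin p.neg.length, ∀ j : Fin s.length,
    (e ⟨i.1, by have h1 := p.len; have h2 := i.2; omega⟩).1 < j.1 →
    j.1 < (e ⟨i.1 + 1, by have h1 := p.len; have h2 := i.2; omega⟩).1 →
    ni (p.neg.get i) (s.get j)

/-- Union `⋃_{a < j < b} s_j` of the itemsets of `s` strictly between positions `a` and `b`. -/
def segUnion [DecidableEq ι] (s : Seq ι) (a b : ℕ) : Finset ι :=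
  (Finset.Ioo a b).biUnion (fun j => s.getD j ∅)

/-- Strict embedding w.r.t. the non-inclusion relation `ni`:
an embedding of `p⁺` such that `q_i ⋫ ⋃_{e_i < j < e_{i+1}} s_j`. -/
def IsStrictEmbedding [DecidableEq ι] (ni : Finset ι → Finset ι → Prop) (p : NSP ι) (s : Seq ι)
    (e : Fin p.pos.length → Fin s.length) : Prop :=
  IsPosEmbedding p s e ∧
  ∀ i : Fin p.neg.length,
    ni (p.neg.get i)
      (segUnion s (e ⟨i.1, by have h1 := p.len; have h2 := i.2; omega⟩).1
                  (e ⟨i.1 + 1, by have h1 := p.len; have h2 := i.2; omega⟩).1)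

/-- Embedding type: soft or strict. -/
inductive EmbT | soft | strict

/-- `τ`-embedding (soft or strict) w.r.t. non-inclusion `ni`. -/
def IsEmb [DecidableEq ι] (τ : EmbT) (ni : Finset ι → Finset ι → Prop) (p : NSP ι) (s : Seq ι)
    (e : Fin p.pos.length → Fin s.length) : Prop :=
  match τ with
  | .soft => IsSoftEmbedding ni p s e
  | .strict => IsStrictEmbedding ni p s e

/-- `p` weakly occurs in `s` under `(τ, ni)`: some `τ`-embedding of `p` in `s` exists. -/
def WeakOcc [DecidableEq ι] (τ : EmbT) (ni : Finset ι → Finset ι → Prop)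
    (p : NSP ι) (s : Seq ι) : Prop :=
  ∃ e, IsEmb τ ni p s e

/-- `p` strongly occurs in `s` under `(τ, ni)`: some embedding of `p⁺` in `s` exists and
every embedding of `p⁺` in `s` is a `τ`-embedding of `p`. -/
def StrongOcc [DecidableEq ι] (τ : EmbT) (ni : Finset ι → Finset ι → Prop)
    (p : NSP ι) (s : Seq ι) : Prop :=
  (∃ e, IsPosEmbedding p s e) ∧ ∀ e, IsPosEmbedding p s e → IsEmb τ ni p s e

/-- Occurrence mode: weak or strong. -/
inductive OccMode | weak | strong

/-- `p` occurs in `s` under mode `μ`, embedding type `τ` and non-inclusion `ni`. -/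
def Occurs [DecidableEq ι] (μ : OccMode) (τ : EmbT) (ni : Finset ι → Finset ι → Prop)
    (p : NSP ι) (s : Seq ι) : Prop :=
  match μ with
  | .weak => WeakOcc τ ni p s
  | .strong => StrongOcc τ ni p s

/-- Dominance: `θ ⩾ θ'` iff `p θ s` implies `p θ' s` for every NSP `p` and sequence `s`. -/
def Dominates (θ θ' : NSP ι → Seq ι → Prop) : Prop :=
  ∀ (p : NSP ι) (s : Seq ι), θ p s → θ' p s

/-- The set Θ of the eight containment relations. -/
def Theta (ι : Type*) [DecidableEq ι] : Set (NSP ι → Seq ι → Prop) :=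
  { θ | ∃ (μ : OccMode) (τ : EmbT) (ni : Finset ι → Finset ι → Prop),
      (ni = PartialNonIncl ∨ ni = TotalNonIncl) ∧ θ = Occurs μ τ ni }

/-- `p ⊑ p'`. -/
def NspIncl [DecidableEq ι] (p p' : NSP ι) : Prop :=
  p.pos.length ≤ p'.pos.length ∧
  ∃ u : Fin p.pos.length → Fin p'.pos.length, StrictMono u ∧
    (∀ i, p.pos.get i ⊆ p'.pos.get (u i)) ∧
    (∀ i : Fin p.neg.length,
      p.neg.get i ⊆
        (Finset.Ico (u ⟨i.1, by have h1 := p.len; have h2 := i.2; omega⟩).1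
                    (u ⟨i.1 + 1, by have h1 := p.len; have h2 := i.2; omega⟩).1).biUnion
          (fun j => p'.neg.getD j ∅)) ∧
    (p.pos.length = p'.pos.length →
      (∃ j : Fin p.pos.length, p.pos.get j ≠ p'.pos.getD j.1 ∅) ∨
      (∃ j : Fin p.neg.length, p.neg.get j ≠ p'.neg.getD j.1 ∅))

/-- `p ◁ p'`. -/
def Lhd (p p' : NSP ι) : Prop :=
  p.pos.length ≤ p'.pos.length ∧
  (∀ i : Fin p.pos.length, p.pos.get i ⊆ p'.pos.getD i.1 ∅) ∧
  (∀ i : Fin p.neg.length, p.neg.get i ⊆ p'.neg.getD i.1 ∅) ∧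
  (p.pos.length = p'.pos.length →
    p.pos.getD (p.pos.length - 1) ∅ ≠ p'.pos.getD (p.pos.length - 1) ∅ ∨
    ∃ j : Fin p.neg.length, p.neg.get j ≠ p'.neg.getD j.1 ∅)

/-- `p ⊑⁺ p'`. -/
def NspInclPlus (p p' : NSP ι) : Prop :=
  p.pos.length = p'.pos.length ∧
  (∀ i : Fin p.pos.length, p.pos.get i = p'.pos.getD i.1 ∅) ∧
  (∀ i : Fin p.neg.length, p.neg.get i ⊆ p'.neg.getD i.1 ∅) ∧
  (∃ j : Fin p.neg.length, p.neg.get j ≠ p'.neg.getD j.1 ∅)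

/-- Support of `p` in the dataset `D` w.r.t. the containment relation `θ`:
the number of sequences of `D` in which `p` occurs according to `θ`. -/
noncomputable def supp (θ : NSP ι → Seq ι → Prop) (D : Finset (Seq ι)) (p : NSP ι) : ℕ :=
  letI := Classical.decPred (fun s : Seq ι => θ p s)
  (D.filter fun s => θ p s).card

/-- none of the eight containment relations is anti-monotonic on
`(N, ⊑)`: with `p = ⟨b ¬c a⟩`, `p' = ⟨b ¬c d a⟩` and `s = ⟨b e d c a⟩`, one has
`p ⊑ p'` and, for every occurrence mode, embedding type and non-inclusion relation,
`p'` occurs in `s` but `p` does not. -/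
theorem no_antimonotonicity_on_nspIncl {ι : Type*} [DecidableEq ι]
    (a b c d e : ι)
    (hab : a ≠ b) (hac : a ≠ c) (had : a ≠ d) (hae : a ≠ e)
    (hbc : b ≠ c) (hbd : b ≠ d) (hbe : b ≠ e)
    (hcd : c ≠ d) (hce : c ≠ e) (hde : d ≠ e) :
    ∃ (p p' : NSP ι) (s : Seq ι),
      p.pos = [{b}, {a}] ∧ p.neg = [{c}] ∧
      p'.pos = [{b}, {d}, {a}] ∧ p'.neg = [{c}, ∅] ∧
      s = [{b}, {e}, {d}, {c}, {a}] ∧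
      NspIncl p p' ∧
      ∀ (μ : OccMode) (τ : EmbT) (ni : Finset ι → Finset ι → Prop),
        (ni = PartialNonIncl ∨ ni = TotalNonIncl) →
        Occurs μ τ ni p' s ∧ ¬ Occurs μ τ ni p s := by
  classical
  set P : NSP ι := ⟨[{b}, {a}], [{c}], by simp, by simp, by simp⟩ with hP
  set P' : NSP ι := ⟨[{b}, {d}, {a}], [{c}, ∅], by simp, by simp, by simp⟩ with hP'
  set s : Seq ι := [{b}, {e}, {d}, {c}, {a}] with hs
  refine ⟨P, P', s, rfl, rfl, rfl, rfl, rfl, ?_, ?_⟩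
  · -- NspIncl
    refine ⟨by simp [P, P'], fun i => ⟨2 * i.1, by have := i.2; simp_all; omega⟩, ?_, ?_, ?_, ?_⟩
    · intro i j hij
      simp only [Fin.lt_def] at *
      omega
    · intro i
      fin_cases i <;> simp [P, P']
    · intro i
      fin_cases i
      intro x hx
      have hx' : x = c := by simpa [P] using hx
      subst hx'
      refine Finset.mem_biUnion.2 ⟨0, by simp, by simp [P']⟩
    · intro h
      simp [P, P'] at h
  · intro μ τ ni hni
    -- helper: locations of letters in s
    have hbloc : ∀ j : Fin s.length, b ∈ s.get j → j.1 = 0 := by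
      intro j hj
      fin_cases j
      · rfl
      · exact absurd (Finset.mem_singleton.mp hj) hbe
      · exact absurd (Finset.mem_singleton.mp hj) hbd
      · exact absurd (Finset.mem_singleton.mp hj) hbc
      · exact absurd (Finset.mem_singleton.mp hj) (fun h => hab h.symm)
    have haloc : ∀ j : Fin s.length, a ∈ s.get j → j.1 = 4 := by
      intro j hj
      fin_cases j
      · exact absurd (Finset.mem_singleton.mp hj) hab
      · exact absurd (Finset.mem_singleton.mp hj) hae
      · exact absurd (Finset.mem_singleton.mp hj) had
      · exact absurd (Finset.mem_singleton.mp hj) hac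
      · rfl
    have hdloc : ∀ j : Fin s.length, d ∈ s.get j → j.1 = 2 := by
      intro j hj
      fin_cases j
      · exact absurd (Finset.mem_singleton.mp hj) (fun h => hbd h.symm)
      · exact absurd (Finset.mem_singleton.mp hj) hde
      · rfl
      · exact absurd (Finset.mem_singleton.mp hj) (fun h => hcd h.symm)
      · exact absurd (Finset.mem_singleton.mp hj) (fun h => had h.symm)
    -- the canonical embeddings
    have hlen : s.length = 5 := by simp [s]
    set E : Fin P.pos.length → Fin s.length :=
      fun i => ⟨4 * i.1, by have := i.2; simp only [P, List.length] at this; omega⟩ with hE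
    set E' : Fin P'.pos.length → Fin s.length :=
      fun i => ⟨2 * i.1, by have := i.2; simp only [P', List.length] at this; omega⟩ with hE'
    have hEpos : IsPosEmbedding P s E := by
      constructor
      · intro i j hij
        have h : i.1 < j.1 := hij
        exact show 4 * i.1 < 4 * j.1 by omega
      · intro i; fin_cases i <;> exact fun _ hx => hx
    have hE'pos : IsPosEmbedding P' s E' := by
      constructor
      · intro i j hij
        have h : i.1 < j.1 := hij
        exact show 2 * i.1 < 2 * j.1 by omega
      · intro i; fin_cases i <;> exact fun _ hx => hx
    -- uniqueness of pos embeddings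
    have hEuniq : ∀ f, IsPosEmbedding P s f → f = E := by
      intro f hfpos
      funext i
      have e0 := hbloc _ (hfpos.2 ⟨0, (by omega : (0:ℕ) < 2)⟩ (Finset.mem_singleton_self b))
      have e1 := haloc _ (hfpos.2 ⟨1, (by omega : (1:ℕ) < 2)⟩ (Finset.mem_singleton_self a))
      fin_cases i
      · exact Fin.ext e0
      · exact Fin.ext e1
    have hE'uniq : ∀ f, IsPosEmbedding P' s f → f = E' := by
      intro f hfpos
      funext i
      have e0 := hbloc _ (hfpos.2 ⟨0, (by omega : (0:ℕ) < 3)⟩ (Finset.mem_singleton_self b))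
      have e1 := hdloc _ (hfpos.2 ⟨1, (by omega : (1:ℕ) < 3)⟩ (Finset.mem_singleton_self d))
      have e2 := haloc _ (hfpos.2 ⟨2, (by omega : (2:ℕ) < 3)⟩ (Finset.mem_singleton_self a))
      fin_cases i
      · exact Fin.ext e0
      · exact Fin.ext e1
      · exact Fin.ext e2
    -- E is not a τ-embedding of P
    have hEnot : ¬ IsEmb τ ni P s E := by
      have hc3 : ¬ ni ({c} : Finset ι) {c} := by
        rcases hni with h | h <;> subst h
        · rintro (h | ⟨x, hx, hx'⟩)
          · simp at h
          · exact hx' (Finset.mem_singleton.mp hx ▸ Finset.mem_singleton_self c)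
        · intro h; exact h c (Finset.mem_singleton_self c) (Finset.mem_singleton_self c)
      cases τ with
      | soft =>
        rintro ⟨_, hneg⟩
        exact hc3 (hneg ⟨0, (by omega : (0:ℕ) < 1)⟩ ⟨3, (by omega : (3:ℕ) < 5)⟩
          (show (0:ℕ) < 3 by omega) (show (3:ℕ) < 4 by omega))
      | strict =>
        rintro ⟨_, hneg⟩
        have hcc : c ∈ segUnion s 0 4 :=
          Finset.mem_biUnion.2 ⟨3, by decide, Finset.mem_singleton_self c⟩
        have hni' := hneg ⟨0, (by omega : (0:ℕ) < 1)⟩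
        rcases hni with h | h <;> subst h
        · rcases hni' with h | ⟨x, hx, hx'⟩
          · exact Finset.singleton_ne_empty c h
          · exact hx' (by rw [Finset.mem_singleton.mp hx]; exact hcc)
        · exact hni' c (Finset.mem_singleton_self c) hcc
    -- E' is a τ-embedding of P'
    have hE'emb : IsEmb τ ni P' s E' := by
      have hce' : ni ({c} : Finset ι) {e} := by
        rcases hni with h | h <;> subst h
        · exact Or.inr ⟨c, Finset.mem_singleton_self c, by simp [hce]⟩
        · intro x hx; simp only [Finset.mem_singleton] at hx; subst hx; simp [hce]
      have hempty : ∀ X : Finset ι, ni (∅ : Finset ι) X := by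
        rcases hni with h | h <;> subst h
        · intro X; exact Or.inl rfl
        · intro X x hx; simp at hx
      cases τ with
      | soft =>
        refine ⟨hE'pos, ?_⟩
        intro i j h1 h2
        fin_cases i
        · have h1' : 0 < j.1 := h1
          have h2' : j.1 < 2 := h2
          have hj : j = ⟨1, by rw [hlen]; omega⟩ := Fin.ext (show j.1 = 1 by omega)
          rw [hj]
          exact hce'
        · have h1' : 2 < j.1 := h1
          have h2' : j.1 < 4 := h2
          have hj : j = ⟨3, by rw [hlen]; omega⟩ := Fin.ext (show j.1 = 3 by omega)
          rw [hj]
          exact hempty _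
      | strict =>
        refine ⟨hE'pos, ?_⟩
        intro i
        fin_cases i
        · have h1 : Finset.Ioo (0:ℕ) 2 = {1} := by decide
          have hseg : segUnion s 0 2 = {e} := by
            simp only [segUnion]
            rw [h1, Finset.singleton_biUnion]
            rfl
          have h' : ni ({c} : Finset ι) (segUnion s 0 2) := by rw [hseg]; exact hce'
          exact h'
        · exact hempty _
    constructor
    · cases μ with
      | weak => exact ⟨E', hE'emb⟩
      | strong => exact ⟨⟨E', hE'pos⟩, fun f hf => by rw [hE'uniq f hf]; exact hE'emb⟩
    · cases μ with
      | weak =>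
        rintro ⟨f, hf⟩
        have hfpos : IsPosEmbedding P s f := by
          cases τ with
          | soft => exact hf.1
          | strict => exact hf.1
        rw [hEuniq f hfpos] at hf
        exact hEnot hf
      | strong =>
        rintro ⟨_, hall⟩
        exact hEnot (hall E hEpos)

end NSPpaper
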